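/- Fix a ∈ ℝ and b, c ∈ ℂ with b ≠ 0, c ≠ 0 and |c| < 1, and set E₊ = √(a² + |b|²) and E₋ = −E₊. Then the sum of subspaces Sol(a, b, c, E₊) + Sol(a, b, c, E₋) is a direct sum and equals the two-dimensional span of the sequences e₁ and e₄. -/

import Mathlib

noncomputable section

open scoped ComplexConjugate

/-- The on-site matrix `V` of the local model. -/
def Vmat (a : ℝ) (b c : ℂ) : Matrix (Fin 4) (Fin 4) ℂ :=
  !![(a : ℂ), conj c, 0, conj b;
     c, -(a : ℂ), conj b, 0;
     0, b, (a : ℂ), -c;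
     b, 0, -(conj c), -(a : ℂ)]

/-- The hopping matrix `A` of the local model. -/
def Amat : Matrix (Fin 4) (Fin 4) ℂ :=
  !![0, -1, 0, 0;
     0, 0, 0, 0;
     0, 0, 0, 0;
     0, 0, 1, 0]

/-- `ψ : ℕ → (Fin 4 → ℂ)` (with `ψ n` standing for the value at the site `n + 1` of the
half-line `{1, 2, 3, …}`) solves the half-line eigenvalue equation `(H♯ − E)ψ = 0`:
`(V − E·I)ψ(1) + A*ψ(2) = 0` and `Aψ(n) + (V − E·I)ψ(n+1) + A*ψ(n+2) = 0` for all `n ≥ 1`. -/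
def IsSolSeq (a : ℝ) (b c : ℂ) (E : ℝ) (ψ : ℕ → Fin 4 → ℂ) : Prop :=
  (Vmat a b c - (E : ℂ) • 1).mulVec (ψ 0) + (Amat.conjTranspose).mulVec (ψ 1) = 0 ∧
    ∀ n : ℕ,
      Amat.mulVec (ψ n) + (Vmat a b c - (E : ℂ) • 1).mulVec (ψ (n + 1)) +
        (Amat.conjTranspose).mulVec (ψ (n + 2)) = 0

/-- The `ℓ²` condition: `∑_{n ≥ 1} ‖ψ(n)‖² < ∞`. -/
def IsL2Seq (ψ : ℕ → Fin 4 → ℂ) : Prop :=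
  Summable fun n => ∑ i, ‖ψ n i‖ ^ 2

/-- The space `Sol(a, b, c, E)` of `ℓ²`-solutions of the half-line eigenvalue equation. -/
def Sol (a : ℝ) (b c : ℂ) (E : ℝ) : Set (ℕ → Fin 4 → ℂ) :=
  {ψ | IsSolSeq a b c E ψ ∧ IsL2Seq ψ}

/-- The sequence `e₁` with `e₁(n) = (c^{n−1}, 0, 0, 0)` (convention `0⁰ = 1`). -/
def eSeq₁ (c : ℂ) : ℕ → Fin 4 → ℂ := fun n => ![c ^ n, 0, 0, 0]

/-- The sequence `e₄` with `e₄(n) = (0, 0, 0, c^{n−1})` (convention `0⁰ = 1`). -/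
def eSeq₄ (c : ℂ) : ℕ → Fin 4 → ℂ := fun n => ![0, 0, 0, c ^ n]

/-- Fix `a ∈ ℝ` and `b, c ∈ ℂ` with `b ≠ 0`, `c ≠ 0` and `|c| < 1`, and set
`E₊ = √(a² + |b|²)` and `E₋ = −E₊`. Then the sum of subspaces
`Sol(a,b,c,E₊) + Sol(a,b,c,E₋)` is a direct sum and equals the two-dimensional span of the
sequences `e₁` and `e₄`. -/
theorem solKey (a E : ℝ) (b c : ℂ) (hc : c ≠ 0) (hc1 : ‖c‖ < 1)
    (hE : ((E : ℝ) : ℂ) ^ 2 = (a : ℂ) ^ 2 + b * conj b)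
    (ψ : ℕ → Fin 4 → ℂ) (hs : IsSolSeq a b c E ψ) (hl : IsL2Seq ψ) :
    ψ = ψ 0 0 • eSeq₁ c + ψ 0 3 • eSeq₄ c := by
  obtain ⟨hB, hC⟩ := hs
  have hB0 := congrFun hB 0
  have hB1 := congrFun hB 1
  have hB2 := congrFun hB 2
  have hB3 := congrFun hB 3
  simp [Vmat, Amat, Matrix.mulVec, dotProduct, Fin.sum_univ_four,
      Matrix.conjTranspose_apply, Matrix.one_apply, Matrix.sub_apply, Matrix.smul_apply,
      Matrix.cons_val_zero, Matrix.cons_val_one, Matrix.head_cons, Matrix.cons_val_two,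
      Matrix.tail_cons, Matrix.cons_val_three, Matrix.head_fin_const, Matrix.vecHead,
      Matrix.vecTail, smul_eq_mul, (show Fin.succ 2 = (3 : Fin 4) from rfl)] at hB0 hB1 hB2 hB3
  have hCC : ∀ n : ℕ, ∀ i : Fin 4,
      (Amat.mulVec (ψ n) + (Vmat a b c - (E : ℂ) • 1).mulVec (ψ (n + 1)) +
        (Amat.conjTranspose).mulVec (ψ (n + 2))) i = 0 := fun n i => congrFun (hC n) i
  have hC0 : ∀ n, -(ψ n 1) + ((a:ℂ) - E) * ψ (n+1) 0 + conj c * ψ (n+1) 1 + conj b * ψ (n+1) 3 = 0 := by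
    intro n; have h := hCC n 0
    simp [Vmat, Amat, Matrix.mulVec, dotProduct, Fin.sum_univ_four,
      Matrix.conjTranspose_apply, Matrix.one_apply, Matrix.sub_apply, Matrix.smul_apply,
      Matrix.cons_val_zero, Matrix.cons_val_one, Matrix.head_cons, Matrix.cons_val_two,
      Matrix.tail_cons, Matrix.cons_val_three, Matrix.head_fin_const, Matrix.vecHead,
      Matrix.vecTail, smul_eq_mul, (show Fin.succ 2 = (3 : Fin 4) from rfl)] at h
    linear_combination h
  have hC1 : ∀ n, c * ψ (n+1) 0 - ((a:ℂ) + E) * ψ (n+1) 1 + conj b * ψ (n+1) 2 - ψ (n+2) 0 = 0 := by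
    intro n; have h := hCC n 1
    simp [Vmat, Amat, Matrix.mulVec, dotProduct, Fin.sum_univ_four,
      Matrix.conjTranspose_apply, Matrix.one_apply, Matrix.sub_apply, Matrix.smul_apply,
      Matrix.cons_val_zero, Matrix.cons_val_one, Matrix.head_cons, Matrix.cons_val_two,
      Matrix.tail_cons, Matrix.cons_val_three, Matrix.head_fin_const, Matrix.vecHead,
      Matrix.vecTail, smul_eq_mul, (show Fin.succ 2 = (3 : Fin 4) from rfl)] at h
    linear_combination h
  have hC2 : ∀ n, b * ψ (n+1) 1 + ((a:ℂ) - E) * ψ (n+1) 2 - c * ψ (n+1) 3 + ψ (n+2) 3 = 0 := by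
    intro n; have h := hCC n 2
    simp [Vmat, Amat, Matrix.mulVec, dotProduct, Fin.sum_univ_four,
      Matrix.conjTranspose_apply, Matrix.one_apply, Matrix.sub_apply, Matrix.smul_apply,
      Matrix.cons_val_zero, Matrix.cons_val_one, Matrix.head_cons, Matrix.cons_val_two,
      Matrix.tail_cons, Matrix.cons_val_three, Matrix.head_fin_const, Matrix.vecHead,
      Matrix.vecTail, smul_eq_mul, (show Fin.succ 2 = (3 : Fin 4) from rfl)] at h
    linear_combination h
  have hC3 : ∀ n, ψ n 2 + b * ψ (n+1) 0 - conj c * ψ (n+1) 2 - ((a:ℂ) + E) * ψ (n+1) 3 = 0 := by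
    intro n; have h := hCC n 3
    simp [Vmat, Amat, Matrix.mulVec, dotProduct, Fin.sum_univ_four,
      Matrix.conjTranspose_apply, Matrix.one_apply, Matrix.sub_apply, Matrix.smul_apply,
      Matrix.cons_val_zero, Matrix.cons_val_one, Matrix.head_cons, Matrix.cons_val_two,
      Matrix.tail_cons, Matrix.cons_val_three, Matrix.head_fin_const, Matrix.vecHead,
      Matrix.vecTail, smul_eq_mul, (show Fin.succ 2 = (3 : Fin 4) from rfl)] at h
    linear_combination h
  -- boundary rows in clean form
  have B0 : ((a:ℂ) - E) * ψ 0 0 + conj c * ψ 0 1 + conj b * ψ 0 3 = 0 := by linear_combination hB0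
  have B1 : c * ψ 0 0 - ((a:ℂ) + E) * ψ 0 1 + conj b * ψ 0 2 - ψ 1 0 = 0 := by linear_combination hB1
  have B2 : b * ψ 0 1 + ((a:ℂ) - E) * ψ 0 2 - c * ψ 0 3 + ψ 1 3 = 0 := by linear_combination hB2
  have B3 : b * ψ 0 0 - conj c * ψ 0 2 - ((a:ℂ) + E) * ψ 0 3 = 0 := by linear_combination hB3
  -- one-step propagation of components 0 and 3, valid for all n
  have P : ∀ n, ψ (n+1) 0 = c * ψ n 0 - ((a:ℂ) + E) * ψ n 1 + conj b * ψ n 2 := by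
    intro n
    match n with
    | 0 => linear_combination -B1
    | Nat.succ m => linear_combination -(hC1 m)
  have S : ∀ n, ψ (n+1) 3 = -(b * ψ n 1) - ((a:ℂ) - E) * ψ n 2 + c * ψ n 3 := by
    intro n
    match n with
    | 0 => linear_combination B2
    | Nat.succ m => linear_combination hC2 m
  obtain ⟨v0, hv0⟩ : ∃ v0, v0 = ((a:ℂ) - E) * ψ 0 0 + conj b * ψ 0 3 := ⟨_, rfl⟩
  obtain ⟨u0, hu0⟩ : ∃ u0, u0 = b * ψ 0 0 - ((a:ℂ) + E) * ψ 0 3 := ⟨_, rfl⟩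
  have hV : ∀ n, ((a:ℂ) - E) * ψ n 0 + conj b * ψ n 3
      = c ^ n * (((a:ℂ) - E) * ψ 0 0 + conj b * ψ 0 3) := by
    intro n
    induction n with
    | zero => rw [pow_zero, one_mul]
    | succ n ih =>
        linear_combination ((a:ℂ) - E) * P n + conj b * S n + c * ih + ψ n 1 * hE
  have hU : ∀ n, b * ψ n 0 - ((a:ℂ) + E) * ψ n 3
      = c ^ n * (b * ψ 0 0 - ((a:ℂ) + E) * ψ 0 3) := by
    intro n
    induction n with
    | zero => rw [pow_zero, one_mul]
    | succ n ih =>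
        linear_combination b * P n - ((a:ℂ) + E) * S n + c * ih - ψ n 2 * hE
  have hcc : conj c * c = ((‖c‖ : ℂ)) ^ 2 := by
    rw [mul_comm, Complex.mul_conj]
    norm_cast
    rw [Complex.normSq_eq_norm_sq]
  have hT : ∀ n : ℕ, ∃ t : ℝ, 1 ≤ t ∧
      (conj c) ^ (n+1) * ψ n 1 = -v0 * (t : ℂ) ∧
      (conj c) ^ (n+1) * ψ n 2 = u0 * (t : ℂ) := by
    intro n
    induction n with
    | zero =>
        refine ⟨1, le_refl _, ?_, ?_⟩
        · push_cast; linear_combination B0 + hv0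
        · push_cast; linear_combination -B3 - hu0
    | succ n ih =>
        obtain ⟨t, ht1, hq, hr⟩ := ih
        have kp : (conj c) ^ (n+1) * c ^ (n+1) = (((‖c‖ : ℂ)) ^ 2) ^ (n+1) := by
          rw [← mul_pow, hcc]
        refine ⟨t + (‖c‖ ^ 2) ^ (n+1), by have := pow_nonneg (sq_nonneg ‖c‖) (n+1); linarith, ?_, ?_⟩
        · push_cast
          linear_combination (conj c) ^ (n+1) * hC0 n - (conj c) ^ (n+1) * hV (n+1) + hq
            - (((a:ℂ) - E) * ψ 0 0 + conj b * ψ 0 3) * kp + (((‖c‖ : ℂ)) ^ 2) ^ (n+1) * hv0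
        · push_cast
          linear_combination -((conj c) ^ (n+1) * hC3 n) + (conj c) ^ (n+1) * hU (n+1) + hr
            + (b * ψ 0 0 - ((a:ℂ) + E) * ψ 0 3) * kp - (((‖c‖ : ℂ)) ^ 2) ^ (n+1) * hu0

  -- from ℓ² the growing parts must vanish
  have hK : (conj c) ≠ 0 := by simpa using hc
  have hvu : v0 = 0 ∧ u0 = 0 := by
    have hb1 : ∀ n, ‖v0‖ ≤ ‖ψ n 1‖ ∧ ‖u0‖ ≤ ‖ψ n 2‖ := by
      intro n
      obtain ⟨t, ht1, hq, hr⟩ := hT n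
      have hcpow : ‖c‖ ^ (n+1) ≤ 1 := pow_le_one₀ (norm_nonneg c) hc1.le
      constructor
      · have h1 : ‖c‖ ^ (n+1) * ‖ψ n 1‖ = ‖v0‖ * t := by
          have := congrArg norm hq
          simpa [norm_mul, norm_pow, RCLike.norm_conj, Complex.norm_real,
            abs_of_nonneg (by linarith : (0:ℝ) ≤ t)] using this
        calc ‖v0‖ ≤ ‖v0‖ * t := le_mul_of_one_le_right (norm_nonneg _) ht1
          _ = ‖c‖ ^ (n+1) * ‖ψ n 1‖ := h1.symm
          _ ≤ 1 * ‖ψ n 1‖ := by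
              apply mul_le_mul_of_nonneg_right hcpow (norm_nonneg _)
          _ = ‖ψ n 1‖ := one_mul _
      · have h1 : ‖c‖ ^ (n+1) * ‖ψ n 2‖ = ‖u0‖ * t := by
          have := congrArg norm hr
          simpa [norm_mul, norm_pow, RCLike.norm_conj, Complex.norm_real,
            abs_of_nonneg (by linarith : (0:ℝ) ≤ t)] using this
        calc ‖u0‖ ≤ ‖u0‖ * t := le_mul_of_one_le_right (norm_nonneg _) ht1
          _ = ‖c‖ ^ (n+1) * ‖ψ n 2‖ := h1.symm
          _ ≤ 1 * ‖ψ n 2‖ := by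
              apply mul_le_mul_of_nonneg_right hcpow (norm_nonneg _)
          _ = ‖ψ n 2‖ := one_mul _
    have hten := hl.tendsto_atTop_zero
    have hvle : ‖v0‖ ^ 2 ≤ 0 := by
      refine ge_of_tendsto hten (Filter.Eventually.of_forall fun n => ?_)
      calc ‖v0‖ ^ 2 ≤ ‖ψ n 1‖ ^ 2 := by
            have := (hb1 n).1
            nlinarith [norm_nonneg v0, norm_nonneg (ψ n 1)]
        _ ≤ ∑ i, ‖ψ n i‖ ^ 2 :=
            Finset.single_le_sum (f := fun i => ‖ψ n i‖ ^ 2)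
              (fun i _ => by positivity) (Finset.mem_univ 1)
    have hule : ‖u0‖ ^ 2 ≤ 0 := by
      refine ge_of_tendsto hten (Filter.Eventually.of_forall fun n => ?_)
      calc ‖u0‖ ^ 2 ≤ ‖ψ n 2‖ ^ 2 := by
            have := (hb1 n).2
            nlinarith [norm_nonneg u0, norm_nonneg (ψ n 2)]
        _ ≤ ∑ i, ‖ψ n i‖ ^ 2 :=
            Finset.single_le_sum (f := fun i => ‖ψ n i‖ ^ 2)
              (fun i _ => by positivity) (Finset.mem_univ 2)
    constructor
    · have : ‖v0‖ = 0 := by nlinarith [norm_nonneg v0]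
      exact norm_eq_zero.mp this
    · have : ‖u0‖ = 0 := by nlinarith [norm_nonneg u0]
      exact norm_eq_zero.mp this
  have qzero : ∀ n, ψ n 1 = 0 := by
    intro n
    obtain ⟨t, _, hq, _⟩ := hT n
    rw [hvu.1] at hq
    simpa [pow_ne_zero _ hK] using hq
  have rzero : ∀ n, ψ n 2 = 0 := by
    intro n
    obtain ⟨t, _, _, hr⟩ := hT n
    rw [hvu.2] at hr
    simpa [pow_ne_zero _ hK] using hr
  have pform : ∀ n, ψ n 0 = c ^ n * ψ 0 0 := by
    intro n
    induction n with
    | zero => rw [pow_zero, one_mul]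
    | succ n ih =>
        rw [P n, qzero n, rzero n, ih]; ring
  have sform : ∀ n, ψ n 3 = c ^ n * ψ 0 3 := by
    intro n
    induction n with
    | zero => rw [pow_zero, one_mul]
    | succ n ih =>
        rw [S n, qzero n, rzero n, ih]; ring
  funext n i
  fin_cases i <;>
    simp [eSeq₁, eSeq₄, Pi.add_apply, Pi.smul_apply, smul_eq_mul]
  · rw [pform n]; ring
  · exact qzero n
  · exact rzero n
  · rw [sform n]; ring

theorem mem_sol (a E : ℝ) (b c : ℂ) (hc1 : ‖c‖ < 1) (p s : ℂ)
    (h1 : ((a:ℂ) - E) * p + conj b * s = 0) (h2 : b * p - ((a:ℂ) + E) * s = 0) :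
    (p • eSeq₁ c + s • eSeq₄ c) ∈ Sol a b c E := by
  constructor
  · constructor
    · funext i
      fin_cases i <;>
        simp [eSeq₁, eSeq₄, Vmat, Amat, Matrix.mulVec, dotProduct, Fin.sum_univ_four,
          Matrix.conjTranspose_apply, Matrix.one_apply, Matrix.sub_apply, Matrix.smul_apply,
          Matrix.cons_val_zero, Matrix.cons_val_one, Matrix.head_cons, Matrix.cons_val_two,
          Matrix.tail_cons, Matrix.cons_val_three, Matrix.head_fin_const, Matrix.vecHead,
          Matrix.vecTail, smul_eq_mul, (show Fin.succ 2 = (3 : Fin 4) from rfl),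
          Pi.add_apply, Pi.smul_apply]
      all_goals first
        | ring1
        | linear_combination h1
        | linear_combination h2
        | linear_combination -h1
        | linear_combination -h2
    · intro n
      funext i
      fin_cases i <;>
        simp [eSeq₁, eSeq₄, Vmat, Amat, Matrix.mulVec, dotProduct, Fin.sum_univ_four,
          Matrix.conjTranspose_apply, Matrix.one_apply, Matrix.sub_apply, Matrix.smul_apply,
          Matrix.cons_val_zero, Matrix.cons_val_one, Matrix.head_cons, Matrix.cons_val_two,
          Matrix.tail_cons, Matrix.cons_val_three, Matrix.head_fin_const, Matrix.vecHead,
          Matrix.vecTail, smul_eq_mul, (show Fin.succ 2 = (3 : Fin 4) from rfl),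
          Pi.add_apply, Pi.smul_apply]
      all_goals first
        | ring1
        | linear_combination c ^ (n+1) * h1
        | linear_combination c ^ (n+1) * h2
        | linear_combination (-c ^ (n+1)) * h1
        | linear_combination (-c ^ (n+1)) * h2
  · have heq : (fun n => ∑ i, ‖(p • eSeq₁ c + s • eSeq₄ c) n i‖ ^ 2)
        = fun n => (‖p‖ ^ 2 + ‖s‖ ^ 2) * (‖c‖ ^ 2) ^ n := by
      funext n
      simp [eSeq₁, eSeq₄, Fin.sum_univ_four, Pi.add_apply, Pi.smul_apply, smul_eq_mul,
        norm_mul, norm_pow]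
      ring
    rw [IsL2Seq, heq]
    exact Summable.mul_left _
      (summable_geometric_of_lt_one (by positivity) (by nlinarith [norm_nonneg c]))

theorem stmt14 (a : ℝ) (b c : ℂ) (hb : b ≠ 0) (hc : c ≠ 0) (hc1 : ‖c‖ < 1) :
    Sol a b c (Real.sqrt (a ^ 2 + ‖b‖ ^ 2)) ∩
        Sol a b c (-Real.sqrt (a ^ 2 + ‖b‖ ^ 2)) = {0} ∧
    {ψ | ∃ φ ∈ Sol a b c (Real.sqrt (a ^ 2 + ‖b‖ ^ 2)),
        ∃ χ ∈ Sol a b c (-Real.sqrt (a ^ 2 + ‖b‖ ^ 2)), ψ = φ + χ} =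
      {ψ | ∃ z w : ℂ, ψ = z • eSeq₁ c + w • eSeq₄ c} ∧
    LinearIndependent ℂ ![eSeq₁ c, eSeq₄ c] := by
  set E := Real.sqrt (a ^ 2 + ‖b‖ ^ 2) with hEdef
  have hposarg : 0 < a ^ 2 + ‖b‖ ^ 2 := by
    have h1 : 0 < ‖b‖ := norm_pos_iff.mpr hb
    nlinarith [sq_nonneg a]
  have hEpos : 0 < E := Real.sqrt_pos.mpr hposarg
  have hE2 : E ^ 2 = a ^ 2 + ‖b‖ ^ 2 := Real.sq_sqrt hposarg.le
  have hEC : ((E : ℝ) : ℂ) ^ 2 = (a : ℂ) ^ 2 + b * conj b := by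
    rw [Complex.mul_conj, Complex.normSq_eq_norm_sq]
    exact_mod_cast congrArg (fun x : ℝ => (x : ℂ)) hE2
  have hEC' : (((-E : ℝ)) : ℂ) ^ 2 = (a : ℂ) ^ 2 + b * conj b := by
    rw [Complex.ofReal_neg, neg_sq]; exact hEC
  have hE0 : ((E : ℝ) : ℂ) ≠ 0 := by exact_mod_cast hEpos.ne'
  refine ⟨?_, ?_, ?_⟩
  · -- intersection is zero
    ext ψ
    simp only [Set.mem_inter_iff, Set.mem_singleton_iff, Sol, Set.mem_setOf_eq]
    constructor
    · rintro ⟨⟨⟨hB1, hC1⟩, -⟩, ⟨hB2, hC2⟩, -⟩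
      have key : ∀ (x z : Fin 4 → ℂ),
          (Vmat a b c - ((E : ℝ) : ℂ) • 1).mulVec x + z = 0 →
          (Vmat a b c - (((-E : ℝ)) : ℂ) • 1).mulVec x + z = 0 → x = 0 := by
        intro x z h h'
        have hxx : (Vmat a b c - ((E : ℝ) : ℂ) • 1).mulVec x
            = (Vmat a b c - (((-E : ℝ)) : ℂ) • 1).mulVec x := by
          linear_combination h - h'
        funext i
        have h2 := congrFun hxx i
        simp only [Matrix.sub_mulVec, Matrix.smul_mulVec, Matrix.one_mulVec,
          Pi.sub_apply, Pi.smul_apply, smul_eq_mul] at h2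
        push_cast at h2
        have h3 : (2 : ℂ) * (((E : ℝ) : ℂ) * x i) = 0 := by linear_combination -h2
        rcases mul_eq_zero.mp h3 with h4 | h4
        · exact absurd h4 two_ne_zero
        · rcases mul_eq_zero.mp h4 with h5 | h5
          · exact absurd h5 hE0
          · exact h5
      funext n
      rw [Pi.zero_apply]
      match n with
      | 0 => exact key _ _ hB1 hB2
      | Nat.succ m =>
          exact key (ψ (m + 1)) (Amat.mulVec (ψ m) + Amat.conjTranspose.mulVec (ψ (m + 2)))
            (by linear_combination hC1 m) (by linear_combination hC2 m)
    · rintro rfl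
      have hz : ∀ F : ℝ, IsSolSeq a b c F 0 ∧ IsL2Seq (0 : ℕ → Fin 4 → ℂ) := by
        intro F
        refine ⟨⟨?_, fun n => ?_⟩, ?_⟩
        · show (Vmat a b c - (F : ℂ) • 1).mulVec ((0 : ℕ → Fin 4 → ℂ) 0)
            + (Amat.conjTranspose).mulVec ((0 : ℕ → Fin 4 → ℂ) 1) = 0
          simp [Matrix.mulVec_zero]
        · show Amat.mulVec ((0 : ℕ → Fin 4 → ℂ) n)
            + (Vmat a b c - (F : ℂ) • 1).mulVec ((0 : ℕ → Fin 4 → ℂ) (n + 1))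
            + (Amat.conjTranspose).mulVec ((0 : ℕ → Fin 4 → ℂ) (n + 2)) = 0
          simp [Matrix.mulVec_zero]
        · show Summable fun n => ∑ i : Fin 4, ‖(0 : ℕ → Fin 4 → ℂ) n i‖ ^ 2
          simpa using summable_zero
      exact ⟨hz E, hz (-E)⟩
  · -- sum set equals the span
    ext ψ
    simp only [Set.mem_setOf_eq]
    constructor
    · rintro ⟨φ, ⟨hφs, hφl⟩, χ, ⟨hχs, hχl⟩, rfl⟩
      have hφ := solKey a E b c hc hc1 hEC φ hφs hφl
      have hχ := solKey a (-E) b c hc hc1 hEC' χ hχs hχl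
      refine ⟨φ 0 0 + χ 0 0, φ 0 3 + χ 0 3, ?_⟩
      funext n i
      have k1 := congrFun (congrFun hφ n) i
      have k2 := congrFun (congrFun hχ n) i
      simp only [Pi.add_apply, Pi.smul_apply, smul_eq_mul] at k1 k2 ⊢
      linear_combination k1 + k2
    · rintro ⟨z, w, rfl⟩
      obtain ⟨α, hα⟩ : ∃ α : ℂ, α = (z * b - ((a : ℂ) - E) * w) / (2 * E * b) := ⟨_, rfl⟩
      obtain ⟨β, hβ⟩ : ∃ β : ℂ, β = (((a : ℂ) + E) * w - z * b) / (2 * E * b) := ⟨_, rfl⟩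
      have h2Eb : (2 : ℂ) * (E : ℂ) * b ≠ 0 := by
        simp [hE0, hb]
      have hzeq : α * ((a : ℂ) + E) + β * ((a : ℂ) - E) = z := by
        rw [hα, hβ]; field_simp; ring
      have hweq : α * b + β * b = w := by
        rw [hα, hβ]; field_simp; ring
      refine ⟨(α * ((a : ℂ) + E)) • eSeq₁ c + (α * b) • eSeq₄ c,
        mem_sol a E b c hc1 _ _ (by linear_combination (-α) * hEC) (by ring),
        (β * ((a : ℂ) - E)) • eSeq₁ c + (β * b) • eSeq₄ c,
        mem_sol a (-E) b c hc1 _ _ ?_ ?_, ?_⟩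
      · push_cast
        linear_combination (-β) * hEC
      · push_cast
        ring
      · funext n i
        simp only [Pi.add_apply, Pi.smul_apply, smul_eq_mul]
        linear_combination (eSeq₁ c n i) * hzeq.symm + (eSeq₄ c n i) * hweq.symm
  · -- linear independence
    rw [LinearIndependent.pair_iff]
    intro s t h
    have h00 := congrFun (congrFun h 0) 0
    have h03 := congrFun (congrFun h 0) 3
    simp [eSeq₁, eSeq₄, Pi.add_apply, Pi.smul_apply, smul_eq_mul] at h00 h03
    exact ⟨h00, h03⟩
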